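/- Let d ≥ 1, let A ⊆ ℝ^d be a bounded Borel set whose topological boundary has Lebesgue measure zero, let Φ ⊆ ℝ^d be locally finite, let h : Φ → ℝ be bounded, and let c ∈ ℝ. Assume: (i) for every compactly supported C¹ function ζ : ℝ^d → ℝ, ε^d Σ_{z ∈ Φ ∩ ε^{-1}A} h(z) ζ(εz) → c ∫_A ζ(x) dx as ε → 0; (ii) limsup_{ε → 0} ε^d Σ_{z ∈ Φ ∩ ε^{-1}A} |h(z)| < ∞; (iii) for each ε ∈ (0,1], I^ε ⊆ Φ ∩ ε^{-1}A with ε^d · #((Φ ∩ ε^{-1}A) \ I^ε) → 0; (iv) there are constants 0 < C₁ ≤ C₂ and radii r^ε_z with C₁ ε ≤ r^ε_z ≤ C₂ ε for all z ∈ I^ε, such that the open balls U^ε_z := U_{r^ε_z}(εz), z ∈ I^ε, are pairwise disjoint. Then the functions g_ε := ε^d Σ_{z ∈ I^ε} h(z) χ_{U^ε_z} / |U^ε_z| are uniformly bounded in L^∞(ℝ^d), and for every ζ ∈ L¹(ℝ^d), ∫_{ℝ^d} g_ε ζ dx → c ∫_A ζ dx as ε → 0; that is, g_ε converges to c·χ_A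 weakly-* in L^∞(ℝ^d). -/

import Mathlib

open MeasureTheory Filter Topology Metric Set Convolution
open scoped ENNReal Pointwise

set_option maxHeartbeats 1000000 in
theorem stmt6 {d : ℕ} (hd : 1 ≤ d)
    (A : Set (EuclideanSpace ℝ (Fin d))) (hAmeas : MeasurableSet A)
    (hAbdd : Bornology.IsBounded A) (hAfr : volume (frontier A) = 0)
    (Φ : Set (EuclideanSpace ℝ (Fin d)))
    -- Φ is locally finite:
    (hΦ : ∀ B : Set (EuclideanSpace ℝ (Fin d)), Bornology.IsBounded B → (Φ ∩ B).Finite)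
    -- h is bounded:
    (h : EuclideanSpace ℝ (Fin d) → ℝ) (hhbdd : ∃ Ch : ℝ, ∀ z ∈ Φ, |h z| ≤ Ch)
    (c : ℝ)
    -- (i) convergence of the empirical sums against C¹ test functions:
    (hi : ∀ ζ : EuclideanSpace ℝ (Fin d) → ℝ, ContDiff ℝ 1 ζ → HasCompactSupport ζ →
      Tendsto (fun ε : ℝ => ε ^ d * ∑ᶠ z ∈ Φ ∩ ε⁻¹ • A, h z * ζ (ε • z)) (𝓝[>] (0:ℝ))
        (𝓝 (c * ∫ x in A, ζ x)))
    -- (ii) the sums of |h| stay bounded as ε → 0: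
    (hii : ∃ C : ℝ, ∀ᶠ ε in 𝓝[>] (0:ℝ), ε ^ d * ∑ᶠ z ∈ Φ ∩ ε⁻¹ • A, |h z| ≤ C)
    -- (iii) the sets I^ε exhaust Φ ∩ ε⁻¹A asymptotically:
    (I : ℝ → Set (EuclideanSpace ℝ (Fin d)))
    (hI : ∀ ε ∈ Set.Ioc (0:ℝ) 1, I ε ⊆ Φ ∩ ε⁻¹ • A)
    (hiii : Tendsto (fun ε : ℝ => ε ^ d * (((Φ ∩ ε⁻¹ • A) \ I ε).ncard : ℝ))
      (𝓝[>] (0:ℝ)) (𝓝 0))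
    -- (iv) radii comparable to ε with pairwise disjoint balls:
    (C₁ C₂ : ℝ) (hC₁ : 0 < C₁) (hC₁₂ : C₁ ≤ C₂)
    (r : ℝ → EuclideanSpace ℝ (Fin d) → ℝ)
    (hr : ∀ ε ∈ Set.Ioc (0:ℝ) 1, ∀ z ∈ I ε, C₁ * ε ≤ r ε z ∧ r ε z ≤ C₂ * ε)
    (hdisj : ∀ ε ∈ Set.Ioc (0:ℝ) 1, ∀ z ∈ I ε, ∀ z' ∈ I ε, z ≠ z' →
      Disjoint (Metric.ball (ε • z) (r ε z)) (Metric.ball (ε • z') (r ε z')))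
    -- g_ε := ε^d Σ_{z ∈ I^ε} h(z) χ_{U^ε_z} / |U^ε_z| :
    (g : ℝ → EuclideanSpace ℝ (Fin d) → ℝ)
    (hg : g = fun ε x => ε ^ d * ∑ᶠ z ∈ I ε,
      (Metric.ball (ε • z) (r ε z)).indicator
        (fun _ => h z / (volume (Metric.ball (ε • z) (r ε z))).toReal) x) :
    -- the g_ε are uniformly bounded in L^∞ ...
    (∃ C : ℝ, ∀ ε ∈ Set.Ioc (0:ℝ) 1, ∀ x, |g ε x| ≤ C) ∧
    -- ... and converge to c·χ_A weakly-* in L^∞, i.e. against every ζ ∈ L¹: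
    (∀ ζ : EuclideanSpace ℝ (Fin d) → ℝ, Integrable ζ →
      Tendsto (fun ε : ℝ => ∫ x, g ε x * ζ x) (𝓝[>] (0:ℝ)) (𝓝 (c * ∫ x in A, ζ x))) := by
  classical
  haveI : Nontrivial (EuclideanSpace ℝ (Fin d)) := Module.nontrivial_of_finrank_pos (R := ℝ)
    (by rw [finrank_euclideanSpace_fin]; omega)
  obtain ⟨Ch, hCh⟩ := hhbdd
  set ω : ℝ := (volume (ball (0 : EuclideanSpace ℝ (Fin d)) 1)).toReal with hωdef
  have hωpos : 0 < ω := by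
    refine ENNReal.toReal_pos (ne_of_gt (measure_ball_pos _ _ one_pos)) measure_ball_lt_top.ne
  -- volume of balls
  have hvol : ∀ (x : EuclideanSpace ℝ (Fin d)) (ρ : ℝ), 0 ≤ ρ →
      (volume (ball x ρ)).toReal = ρ ^ d * ω := by
    intro x ρ hρ
    rw [Measure.addHaar_ball volume x hρ, finrank_euclideanSpace_fin, ENNReal.toReal_mul,
      ENNReal.toReal_ofReal (by positivity)]
  have hfin : ∀ ε : ℝ, (Φ ∩ ε⁻¹ • A).Finite := fun ε => hΦ _ (hAbdd.smul₀ _)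
  have hIfin : ∀ ε ∈ Set.Ioc (0:ℝ) 1, (I ε).Finite := fun ε hε => (hfin ε).subset (hI ε hε)
  -- rewrite g as a Finset sum
  have hgS : ∀ (ε : ℝ) (hε : ε ∈ Set.Ioc (0:ℝ) 1) (x : EuclideanSpace ℝ (Fin d)),
      g ε x = ε ^ d * ∑ z ∈ (hIfin ε hε).toFinset,
        (ball (ε • z) (r ε z)).indicator
          (fun _ => h z / (volume (ball (ε • z) (r ε z))).toReal) x := by
    intro ε hε x
    rw [hg]
    simp only
    rw [finsum_mem_eq_finite_toFinset_sum _ (hIfin ε hε)]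
  -- positivity of ball volumes
  have hVpos : ∀ (ε : ℝ), ε ∈ Set.Ioc (0:ℝ) 1 → ∀ z ∈ I ε,
      0 < (volume (ball (ε • z) (r ε z))).toReal ∧
      (C₁ * ε) ^ d * ω ≤ (volume (ball (ε • z) (r ε z))).toReal := by
    intro ε hε z hz
    have hεpos : 0 < ε := hε.1
    have hr1 := (hr ε hε z hz).1
    have hrpos : 0 < r ε z := lt_of_lt_of_le (by positivity) hr1
    rw [hvol _ _ hrpos.le]
    constructor
    · positivity
    · have : (C₁ * ε) ^ d ≤ (r ε z) ^ d := pow_le_pow_left₀ (by positivity) hr1 d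
      exact mul_le_mul_of_nonneg_right this hωpos.le
  -- the uniform bound
  set Cg : ℝ := max 0 (Ch / (C₁ ^ d * ω)) with hCgdef
  have hCg0 : 0 ≤ Cg := le_max_left _ _
  have hCb : ∀ ε ∈ Set.Ioc (0:ℝ) 1, ∀ x, |g ε x| ≤ Cg := by
    intro ε hε x
    rw [hgS ε hε x]
    by_cases hx : ∃ z ∈ (hIfin ε hε).toFinset, x ∈ ball (ε • z) (r ε z)
    · obtain ⟨z₀, hz₀T, hz₀x⟩ := hx
      have hz₀I : z₀ ∈ I ε := ((hIfin ε hε).mem_toFinset).1 hz₀T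
      have hz₀Φ : z₀ ∈ Φ := (hI ε hε hz₀I).1
      have hsum : ∑ z ∈ (hIfin ε hε).toFinset,
          (ball (ε • z) (r ε z)).indicator
            (fun _ => h z / (volume (ball (ε • z) (r ε z))).toReal) x
          = (ball (ε • z₀) (r ε z₀)).indicator
            (fun _ => h z₀ / (volume (ball (ε • z₀) (r ε z₀))).toReal) x := by
        refine Finset.sum_eq_single_of_mem z₀ hz₀T ?_
        intro z hzT hne
        have hzI : z ∈ I ε := ((hIfin ε hε).mem_toFinset).1 hzT
        by_cases hxz : x ∈ ball (ε • z) (r ε z)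
        · exact absurd hz₀x (Set.disjoint_left.mp (hdisj ε hε z hzI z₀ hz₀I hne) hxz)
        · exact Set.indicator_of_notMem hxz _
      rw [hsum, Set.indicator_of_mem hz₀x]
      obtain ⟨hV1, hV2⟩ := hVpos ε hε z₀ hz₀I
      have hCh0 : 0 ≤ Ch := le_trans (abs_nonneg _) (hCh _ hz₀Φ)
      have hεpos : 0 < ε := hε.1
      have habs : |ε ^ d * (h z₀ / (volume (ball (ε • z₀) (r ε z₀))).toReal)|
          = ε ^ d * (|h z₀| / (volume (ball (ε • z₀) (r ε z₀))).toReal) := by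
        rw [abs_mul, abs_of_nonneg (by positivity : (0:ℝ) ≤ ε ^ d), abs_div,
          abs_of_nonneg hV1.le]
      rw [habs]
      have hstep : ε ^ d * (|h z₀| / (volume (ball (ε • z₀) (r ε z₀))).toReal)
          ≤ ε ^ d * (Ch / ((C₁ * ε) ^ d * ω)) := by
        have h1 : |h z₀| / (volume (ball (ε • z₀) (r ε z₀))).toReal
            ≤ Ch / ((C₁ * ε) ^ d * ω) :=
          div_le_div₀ (by exact hCh0) (hCh _ hz₀Φ) (by positivity) hV2
        exact mul_le_mul_of_nonneg_left h1 (by positivity)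
      refine le_trans hstep (le_trans (le_of_eq ?_) (le_max_right _ _))
      field_simp
      ring
    · push_neg at hx
      have : ∑ z ∈ (hIfin ε hε).toFinset,
          (ball (ε • z) (r ε z)).indicator
            (fun _ => h z / (volume (ball (ε • z) (r ε z))).toReal) x = 0 :=
        Finset.sum_eq_zero fun z hz => Set.indicator_of_notMem (hx z hz) _
      rw [this, mul_zero, abs_zero]
      exact hCg0
  -- measurability of g ε
  have hgm : ∀ ε ∈ Set.Ioc (0:ℝ) 1, Measurable (g ε) := by
    intro ε hε
    have : g ε = fun x => ε ^ d * ∑ z ∈ (hIfin ε hε).toFinset,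
        (ball (ε • z) (r ε z)).indicator
          (fun _ => h z / (volume (ball (ε • z) (r ε z))).toReal) x := funext (hgS ε hε)
    rw [this]
    exact (Finset.measurable_sum _ fun z _ =>
      measurable_const.indicator measurableSet_ball).const_mul _
  -- the integral identity
  have hkey : ∀ (ε : ℝ) (hε : ε ∈ Set.Ioc (0:ℝ) 1)
      (ζ : EuclideanSpace ℝ (Fin d) → ℝ) (hζ : Integrable ζ),
      Integrable (fun x => g ε x * ζ x) ∧
      ∫ x, g ε x * ζ x = ∑ z ∈ (hIfin ε hε).toFinset,
        ε ^ d * (h z / (volume (ball (ε • z) (r ε z))).toReal) *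
          ∫ x in ball (ε • z) (r ε z), ζ x := by
    intro ε hε ζ hζ
    have hfunext : (fun x => g ε x * ζ x) = fun x => ∑ z ∈ (hIfin ε hε).toFinset,
        (ball (ε • z) (r ε z)).indicator
          (fun y => ε ^ d * (h z / (volume (ball (ε • z) (r ε z))).toReal) * ζ y) x := by
      funext x
      rw [hgS ε hε x, Finset.mul_sum, Finset.sum_mul]
      refine Finset.sum_congr rfl fun z hz => ?_
      simp only [Set.indicator]
      split_ifs
      · ring
      · simp
    have hintz : ∀ z ∈ (hIfin ε hε).toFinset,
        Integrable ((ball (ε • z) (r ε z)).indicator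
          (fun y => ε ^ d * (h z / (volume (ball (ε • z) (r ε z))).toReal) * ζ y)) :=
      fun z _ => (hζ.const_mul _).indicator measurableSet_ball
    constructor
    · rw [hfunext]
      exact integrable_finset_sum _ hintz
    · rw [hfunext, integral_finset_sum _ hintz]
      refine Finset.sum_congr rfl fun z hz => ?_
      rw [integral_indicator measurableSet_ball, integral_const_mul]
  -- main lemma for C¹ compactly supported test functions
  have hmain : ∀ ζ : EuclideanSpace ℝ (Fin d) → ℝ, ContDiff ℝ 1 ζ → HasCompactSupport ζ →
      Tendsto (fun ε : ℝ => ∫ x, g ε x * ζ x) (𝓝[>] (0:ℝ)) (𝓝 (c * ∫ x in A, ζ x)) := by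
    intro ζ hζ1 hζs
    have hζc : Continuous ζ := hζ1.continuous
    have hζint : Integrable ζ := hζc.integrable_of_hasCompactSupport hζs
    obtain ⟨Mζ, hMζ⟩ : ∃ M : ℝ, ∀ x, ‖ζ x‖ ≤ M := hζc.bounded_above_of_compact_support hζs
    have hMζ0 : 0 ≤ Mζ := le_trans (norm_nonneg _) (hMζ 0)
    obtain ⟨C0, hC0⟩ := hii
    have hS := hi ζ hζ1 hζs
    have key : Tendsto (fun ε : ℝ => (∫ x, g ε x * ζ x) -
        ε ^ d * ∑ᶠ z ∈ Φ ∩ ε⁻¹ • A, h z * ζ (ε • z)) (𝓝[>] (0:ℝ)) (𝓝 0) := by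
      rw [NormedAddCommGroup.tendsto_nhds_zero]
      intro δ hδ
      set C' : ℝ := max C0 0 + 1 with hC'def
      have hmax0 : (0:ℝ) ≤ max C0 0 := le_max_right _ _
      have hC'pos : 0 < C' := by positivity
      set δ' : ℝ := δ / (2 * C') with hδ'def
      have hδ'pos : 0 < δ' := by positivity
      obtain ⟨η, hη, hηuc⟩ := Metric.uniformContinuous_iff.mp
        (hζs.uniformContinuous_of_continuous hζc) δ' hδ'pos
      set Mb : ℝ := max Ch 0 * Mζ + 1 with hMbdef
      have hmaxCh : (0:ℝ) ≤ max Ch 0 := le_max_right _ _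
      have hMb : 0 < Mb := by positivity
      have hC₂pos : 0 < C₂ := lt_of_lt_of_le hC₁ hC₁₂
      have hev1 : ∀ᶠ ε in 𝓝[>] (0:ℝ), ε ∈ Set.Ioc (0:ℝ) 1 :=
        eventually_of_mem (Ioc_mem_nhdsGT_of_mem (by simp)) fun x hx => hx
      have hev2 : ∀ᶠ ε in 𝓝[>] (0:ℝ), ε < η / C₂ :=
        eventually_of_mem (Ioo_mem_nhdsGT_of_mem ⟨le_refl 0, by positivity⟩) fun x hx => hx.2
      have hev3 : ∀ᶠ ε in 𝓝[>] (0:ℝ),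
          ε ^ d * (((Φ ∩ ε⁻¹ • A) \ I ε).ncard : ℝ) < δ / (2 * Mb) :=
        hiii.eventually (gt_mem_nhds (by positivity))
      filter_upwards [hev1, hev2, hev3, hC0] with ε hε hεη hεcard hεC0
      have hεpos : 0 < ε := hε.1
      have hTsub : (hIfin ε hε).toFinset ⊆ (hfin ε).toFinset :=
        Set.Finite.toFinset_subset_toFinset.mpr (hI ε hε)
      have hSrw : ε ^ d * ∑ᶠ z ∈ Φ ∩ ε⁻¹ • A, h z * ζ (ε • z)
          = ε ^ d * ∑ z ∈ (hfin ε).toFinset, h z * ζ (ε • z) := by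
        rw [finsum_mem_eq_finite_toFinset_sum _ (hfin ε)]
      have hC0rw : ε ^ d * ∑ z ∈ (hfin ε).toFinset, |h z| ≤ C0 := by
        rwa [finsum_mem_eq_finite_toFinset_sum _ (hfin ε)] at hεC0
      have hint := (hkey ε hε ζ hζint).2
      -- Term A : replacing ball averages by point values
      have hA : ‖(∫ x, g ε x * ζ x) - ε ^ d * ∑ z ∈ (hIfin ε hε).toFinset,
          h z * ζ (ε • z)‖ ≤ δ / 2 := by
        rw [hint, Finset.mul_sum, ← Finset.sum_sub_distrib]
        refine le_trans (norm_sum_le _ _) ?_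
        have hterm : ∀ z ∈ (hIfin ε hε).toFinset,
            ‖ε ^ d * (h z / (volume (ball (ε • z) (r ε z))).toReal) *
              (∫ x in ball (ε • z) (r ε z), ζ x) - ε ^ d * (h z * ζ (ε • z))‖
            ≤ δ' * (ε ^ d * |h z|) := by
          intro z hzT
          have hzI : z ∈ I ε := ((hIfin ε hε).mem_toFinset).1 hzT
          obtain ⟨hV0, _⟩ := hVpos ε hε z hzI
          set V : ℝ := (volume (ball (ε • z) (r ε z))).toReal with hVdef
          have hVne : V ≠ 0 := ne_of_gt hV0
          have hsub : (∫ x in ball (ε • z) (r ε z), ζ x) - V * ζ (ε • z)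
              = ∫ x in ball (ε • z) (r ε z), (ζ x - ζ (ε • z)) := by
            rw [integral_sub hζint.integrableOn (integrableOn_const measure_ball_lt_top.ne),
              setIntegral_const, smul_eq_mul]
            rfl
          have hest : ‖∫ x in ball (ε • z) (r ε z), (ζ x - ζ (ε • z))‖ ≤ δ' * V := by
            refine norm_setIntegral_le_of_norm_le_const measure_ball_lt_top ?_
            intro x hx
            have hd1 : dist x (ε • z) < η := by
              have h1 : dist x (ε • z) < r ε z := mem_ball.1 hx
              have h2 : r ε z ≤ C₂ * ε := (hr ε hε z hzI).2
              have h3 : C₂ * ε < η := by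
                rw [lt_div_iff₀ hC₂pos] at hεη; linarith [hεη]
              linarith
            have := hηuc hd1
            rw [Real.dist_eq] at this
            exact le_of_lt (by simpa [Real.norm_eq_abs] using this)
          have halg : ε ^ d * (h z / V) * (∫ x in ball (ε • z) (r ε z), ζ x)
              - ε ^ d * (h z * ζ (ε • z))
              = ε ^ d * (h z / V) *
                ((∫ x in ball (ε • z) (r ε z), ζ x) - V * ζ (ε • z)) := by
            field_simp
          rw [halg, hsub]
          rw [norm_mul]
          have h1 : ‖ε ^ d * (h z / V)‖ = ε ^ d * (|h z| / V) := by
            rw [norm_mul, Real.norm_eq_abs, Real.norm_eq_abs, abs_of_nonneg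
              (by positivity : (0:ℝ) ≤ ε ^ d), abs_div, abs_of_nonneg hV0.le]
          rw [h1]
          calc ε ^ d * (|h z| / V) * ‖∫ x in ball (ε • z) (r ε z), (ζ x - ζ (ε • z))‖
              ≤ ε ^ d * (|h z| / V) * (δ' * V) := by
                exact mul_le_mul_of_nonneg_left hest (by positivity)
            _ = δ' * (ε ^ d * |h z|) := by field_simp
        calc ∑ z ∈ (hIfin ε hε).toFinset,
            ‖ε ^ d * (h z / (volume (ball (ε • z) (r ε z))).toReal) *
              (∫ x in ball (ε • z) (r ε z), ζ x) - ε ^ d * (h z * ζ (ε • z))‖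
            ≤ ∑ z ∈ (hIfin ε hε).toFinset, δ' * (ε ^ d * |h z|) := Finset.sum_le_sum hterm
          _ = δ' * (ε ^ d * ∑ z ∈ (hIfin ε hε).toFinset, |h z|) := by
              rw [Finset.mul_sum, Finset.mul_sum]
          _ ≤ δ' * C' := by
              have h1 : ∑ z ∈ (hIfin ε hε).toFinset, |h z|
                  ≤ ∑ z ∈ (hfin ε).toFinset, |h z| :=
                Finset.sum_le_sum_of_subset_of_nonneg hTsub fun _ _ _ => abs_nonneg _
              have h2 : ε ^ d * ∑ z ∈ (hIfin ε hε).toFinset, |h z| ≤ C0 :=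
                le_trans (mul_le_mul_of_nonneg_left h1 (by positivity)) hC0rw
              have h3 : C0 ≤ C' := by
                rw [hC'def]; linarith [le_max_left C0 (0:ℝ)]
              exact mul_le_mul_of_nonneg_left (h2.trans h3) hδ'pos.le
          _ = δ / 2 := by rw [hδ'def]; field_simp
      -- Term B : completing the sum from I ε to Φ ∩ ε⁻¹ • A
      have hB : ‖ε ^ d * ∑ z ∈ (hIfin ε hε).toFinset, h z * ζ (ε • z)
          - ε ^ d * ∑ z ∈ (hfin ε).toFinset, h z * ζ (ε • z)‖ < δ / 2 := by
        have hdiff : ε ^ d * ∑ z ∈ (hIfin ε hε).toFinset, h z * ζ (ε • z)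
            - ε ^ d * ∑ z ∈ (hfin ε).toFinset, h z * ζ (ε • z)
            = -(ε ^ d * ∑ z ∈ (hfin ε).toFinset \ (hIfin ε hε).toFinset, h z * ζ (ε • z)) := by
          rw [← Finset.sum_sdiff hTsub]
          ring
        rw [hdiff, norm_neg]
        have hcard : (((Φ ∩ ε⁻¹ • A) \ I ε).ncard : ℝ)
            = (((hfin ε).toFinset \ (hIfin ε hε).toFinset).card : ℝ) := by
          have hdf : ((Φ ∩ ε⁻¹ • A) \ I ε).Finite := (hfin ε).sdiff
          rw [Set.ncard_eq_toFinset_card _ hdf,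
            Set.Finite.toFinset_sdiff (hfin ε) (hIfin ε hε) hdf]
        have hsumb : ‖∑ z ∈ (hfin ε).toFinset \ (hIfin ε hε).toFinset, h z * ζ (ε • z)‖
            ≤ (((hfin ε).toFinset \ (hIfin ε hε).toFinset).card : ℝ) * (max Ch 0 * Mζ) := by
          refine le_trans (norm_sum_le _ _) ?_
          have hb : ∀ z ∈ (hfin ε).toFinset \ (hIfin ε hε).toFinset,
              ‖h z * ζ (ε • z)‖ ≤ max Ch 0 * Mζ := by
            intro z hz
            have hzΦ : z ∈ Φ := (((hfin ε).mem_toFinset).1 (Finset.mem_sdiff.1 hz).1).1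
            rw [norm_mul, Real.norm_eq_abs]
            exact mul_le_mul ((hCh z hzΦ).trans (le_max_left _ _)) (hMζ _)
              (norm_nonneg _) hmaxCh
          simpa [nsmul_eq_mul] using Finset.sum_le_card_nsmul _ _ _ hb
        have h4 : ‖ε ^ d * ∑ z ∈ (hfin ε).toFinset \ (hIfin ε hε).toFinset, h z * ζ (ε • z)‖
            ≤ (ε ^ d * (((Φ ∩ ε⁻¹ • A) \ I ε).ncard : ℝ)) * Mb := by
          rw [norm_mul, Real.norm_eq_abs, abs_of_nonneg (by positivity : (0:ℝ) ≤ ε ^ d)]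
          rw [hcard, mul_assoc]
          refine mul_le_mul_of_nonneg_left ?_ (by positivity)
          refine le_trans hsumb ?_
          refine mul_le_mul_of_nonneg_left ?_ (Nat.cast_nonneg _)
          rw [hMbdef]; linarith
        refine lt_of_le_of_lt h4 ?_
        have hnn : 0 ≤ ε ^ d * (((Φ ∩ ε⁻¹ • A) \ I ε).ncard : ℝ) := by positivity
        calc (ε ^ d * (((Φ ∩ ε⁻¹ • A) \ I ε).ncard : ℝ)) * Mb
            < (δ / (2 * Mb)) * Mb := by exact mul_lt_mul_of_pos_right hεcard hMb
          _ = δ / 2 := by field_simp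
      rw [hSrw]
      calc ‖(∫ x, g ε x * ζ x) - ε ^ d * ∑ z ∈ (hfin ε).toFinset, h z * ζ (ε • z)‖
          ≤ ‖(∫ x, g ε x * ζ x) - ε ^ d * ∑ z ∈ (hIfin ε hε).toFinset, h z * ζ (ε • z)‖
            + ‖ε ^ d * ∑ z ∈ (hIfin ε hε).toFinset, h z * ζ (ε • z)
              - ε ^ d * ∑ z ∈ (hfin ε).toFinset, h z * ζ (ε • z)‖ :=
            norm_sub_le_norm_sub_add_norm_sub _ _ _
        _ < δ / 2 + δ / 2 := add_lt_add_of_le_of_lt hA hB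
        _ = δ := by ring
    have := key.add hS
    simp only [sub_add_cancel, zero_add] at this
    exact this
  refine ⟨⟨Cg, hCb⟩, ?_⟩
  intro ζ hζint
  -- density of C¹ compactly supported functions in L¹
  have hdens : ∀ δ : ℝ, 0 < δ → ∃ ζ₂ : EuclideanSpace ℝ (Fin d) → ℝ,
      ContDiff ℝ 1 ζ₂ ∧ HasCompactSupport ζ₂ ∧ Integrable ζ₂ ∧
        (∫ x, ‖ζ x - ζ₂ x‖) ≤ δ := by
    intro δ hδ
    obtain ⟨ζ₁, hζ₁s, hζ₁L1, hζ₁c, hζ₁int⟩ :=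
      hζint.exists_hasCompactSupport_integral_sub_le (half_pos hδ)
    set K : Set (EuclideanSpace ℝ (Fin d)) := cthickening 1 (tsupport ζ₁) with hKdef
    have hKcomp : IsCompact K := hζ₁s.cthickening
    have hKvol : volume K < ⊤ := hKcomp.measure_lt_top
    set V : ℝ := (volume K).toReal with hVdef
    have hV0 : 0 ≤ V := ENNReal.toReal_nonneg
    set η : ℝ := (δ / 2) / (V + 1) with hηdef
    have hη : 0 < η := by positivity
    obtain ⟨δu, hδu, hδuc⟩ := Metric.uniformContinuous_iff.mp
      (hζ₁s.uniformContinuous_of_continuous hζ₁c) η hη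
    have hmin : 0 < min δu 1 := lt_min hδu one_pos
    set φ : ContDiffBump (0 : EuclideanSpace ℝ (Fin d)) :=
      ⟨min δu 1 / 2, min δu 1, by positivity, by linarith⟩ with hφdef
    set ζ₂ : EuclideanSpace ℝ (Fin d) → ℝ :=
      (φ.normed volume) ⋆[ContinuousLinearMap.lsmul ℝ ℝ] ζ₁ with hζ₂def
    have hζ₂smooth : ContDiff ℝ 1 ζ₂ :=
      φ.hasCompactSupport_normed.contDiff_convolution_left _ φ.contDiff_normed
        hζ₁c.locallyIntegrable
    have hζ₂s : HasCompactSupport ζ₂ := φ.hasCompactSupport_normed.convolution _ hζ₁s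
    have hζ₂int : Integrable ζ₂ := hζ₂smooth.continuous.integrable_of_hasCompactSupport hζ₂s
    have hζ₂dist : ∀ x, ‖ζ₁ x - ζ₂ x‖ ≤ η := by
      intro x
      have h1 : dist (ζ₂ x) (ζ₁ x) ≤ η := by
        refine φ.dist_normed_convolution_le hζ₁c.aestronglyMeasurable ?_
        intro y hy
        have : dist y x < δu := lt_of_lt_of_le (mem_ball.1 hy) (min_le_left _ _)
        exact le_of_lt (hδuc this)
      rw [Real.norm_eq_abs, abs_sub_comm, ← Real.dist_eq]
      exact h1
    have hζ₂supp : ∀ x ∉ K, ‖ζ₁ x - ζ₂ x‖ = 0 := by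
      intro x hx
      have h1 : ζ₁ x = 0 := by
        refine image_eq_zero_of_notMem_tsupport fun hmem => hx ?_
        exact self_subset_cthickening _ hmem
      have h2 : ζ₂ x = 0 := by
        by_contra hne
        have hmem : x ∈ Function.support ζ₂ := hne
        have := support_convolution_subset (L := ContinuousLinearMap.lsmul ℝ ℝ)
          (μ := volume) (f := φ.normed volume) (g := ζ₁) hmem
        obtain ⟨a, ha, b, hb, rfl⟩ := this
        refine hx ?_
        have ha' : ‖a‖ ≤ 1 := by
          have : a ∈ tsupport (φ.normed volume) := subset_tsupport _ ha
          rw [φ.tsupport_normed_eq] at this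
          simpa using (mem_closedBall_iff_norm.1 this).trans (show φ.rOut ≤ 1 from min_le_right δu 1)
        have hb' : b ∈ tsupport ζ₁ := subset_tsupport _ hb
        refine mem_cthickening_of_dist_le _ b 1 _ hb' ?_
        simpa [dist_eq_norm] using ha'
      rw [h1, h2, sub_zero, norm_zero]
    have hL1 : (∫ x, ‖ζ₁ x - ζ₂ x‖) ≤ δ / 2 := by
      have heq : (∫ x, ‖ζ₁ x - ζ₂ x‖) = ∫ x in K, ‖ζ₁ x - ζ₂ x‖ :=
        (setIntegral_eq_integral_of_forall_compl_eq_zero fun x hx => hζ₂supp x hx).symm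
      rw [heq]
      have hb : ‖∫ x in K, ‖ζ₁ x - ζ₂ x‖‖ ≤ η * V :=
        norm_setIntegral_le_of_norm_le_const hKvol
          (fun x _ => by simpa using hζ₂dist x)
      have h2 : (∫ x in K, ‖ζ₁ x - ζ₂ x‖) ≤ η * V := le_trans (le_abs_self _) hb
      refine le_trans h2 ?_
      rw [hηdef]
      rw [div_mul_eq_mul_div, div_le_iff₀ (by positivity)]
      nlinarith [hδ.le, hV0]
    refine ⟨ζ₂, hζ₂smooth, hζ₂s, hζ₂int, ?_⟩
    have htri : ∀ x, ‖ζ x - ζ₂ x‖ ≤ ‖ζ x - ζ₁ x‖ + ‖ζ₁ x - ζ₂ x‖ := fun x => by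
      simpa using norm_sub_le_norm_sub_add_norm_sub (ζ x) (ζ₁ x) (ζ₂ x)
    calc (∫ x, ‖ζ x - ζ₂ x‖) ≤ ∫ x, (‖ζ x - ζ₁ x‖ + ‖ζ₁ x - ζ₂ x‖) := by
          refine integral_mono (hζint.sub hζ₂int).norm ?_ htri
          exact (hζint.sub hζ₁int).norm.add (hζ₁int.sub hζ₂int).norm
      _ = (∫ x, ‖ζ x - ζ₁ x‖) + ∫ x, ‖ζ₁ x - ζ₂ x‖ :=
          integral_add (hζint.sub hζ₁int).norm (hζ₁int.sub hζ₂int).norm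
      _ ≤ δ / 2 + δ / 2 := add_le_add hζ₁L1 hL1
      _ = δ := by ring
  -- the final approximation argument
  rw [Metric.tendsto_nhds]
  intro δ hδ
  have hδ4 : (0:ℝ) < δ / 4 / (Cg + 1) := by positivity
  have hδc : (0:ℝ) < δ / 4 / (|c| + 1) := by positivity
  obtain ⟨ζ₂, hζ₂1, hζ₂s, hζ₂int, hζ₂L1⟩ :=
    hdens (min (δ / 4 / (Cg + 1)) (δ / 4 / (|c| + 1))) (lt_min hδ4 hδc)
  have hev := (hmain ζ₂ hζ₂1 hζ₂s).eventually
    (Metric.ball_mem_nhds _ (show (0:ℝ) < δ / 4 by positivity))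
  have hev1 : ∀ᶠ ε in 𝓝[>] (0:ℝ), ε ∈ Set.Ioc (0:ℝ) 1 :=
    eventually_of_mem (Ioc_mem_nhdsGT_of_mem (by simp)) fun x hx => hx
  filter_upwards [hev, hev1] with ε hd2 hε
  have hgb := hCb ε hε
  have hgbn : ∀ x, ‖g ε x‖ ≤ Cg := fun x => by rw [Real.norm_eq_abs]; exact hgb x
  have hgεint : Integrable (fun x => g ε x * ζ x) :=
    hζint.bdd_mul ((hgm ε hε).aestronglyMeasurable) (Eventually.of_forall hgbn)
  have hgε₂int : Integrable (fun x => g ε x * ζ₂ x) :=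
    hζ₂int.bdd_mul ((hgm ε hε).aestronglyMeasurable) (Eventually.of_forall hgbn)
  have h1 : |(∫ x, g ε x * ζ x) - ∫ x, g ε x * ζ₂ x| ≤ δ / 4 := by
    rw [← integral_sub hgεint hgε₂int]
    have hmul : ∀ x, g ε x * ζ x - g ε x * ζ₂ x = g ε x * (ζ x - ζ₂ x) := fun x => by ring
    calc |∫ x, (g ε x * ζ x - g ε x * ζ₂ x)|
        ≤ ∫ x, ‖g ε x * ζ x - g ε x * ζ₂ x‖ := by
          rw [← Real.norm_eq_abs]; exact norm_integral_le_integral_norm _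
      _ ≤ ∫ x, Cg * ‖ζ x - ζ₂ x‖ := by
          refine integral_mono (hgεint.sub hgε₂int).norm
            ((hζint.sub hζ₂int).norm.const_mul Cg) fun x => ?_
          rw [hmul x, norm_mul]
          exact mul_le_mul_of_nonneg_right (hgbn x) (norm_nonneg _)
      _ = Cg * ∫ x, ‖ζ x - ζ₂ x‖ := integral_const_mul _ _
      _ ≤ Cg * (δ / 4 / (Cg + 1)) :=
          mul_le_mul_of_nonneg_left (hζ₂L1.trans (min_le_left _ _)) hCg0
      _ ≤ (Cg + 1) * (δ / 4 / (Cg + 1)) :=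
          mul_le_mul_of_nonneg_right (by linarith) (by positivity)
      _ = δ / 4 := by field_simp
  have h2 : |(∫ x, g ε x * ζ₂ x) - c * ∫ x in A, ζ₂ x| < δ / 4 := by
    have := Metric.mem_ball.1 hd2
    rwa [Real.dist_eq] at this
  have h3 : |c * (∫ x in A, ζ₂ x) - c * ∫ x in A, ζ x| ≤ δ / 4 := by
    rw [← mul_sub, abs_mul]
    have hAb : |(∫ x in A, ζ₂ x) - ∫ x in A, ζ x| ≤ ∫ x, ‖ζ x - ζ₂ x‖ := by
      rw [← integral_sub hζ₂int.integrableOn hζint.integrableOn, ← Real.norm_eq_abs]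
      calc ‖∫ x in A, (ζ₂ x - ζ x)‖
          ≤ ∫ x in A, ‖ζ₂ x - ζ x‖ := norm_integral_le_integral_norm _
        _ ≤ ∫ x, ‖ζ₂ x - ζ x‖ :=
            setIntegral_le_integral (hζ₂int.sub hζint).norm
              (Eventually.of_forall fun x => norm_nonneg _)
        _ = ∫ x, ‖ζ x - ζ₂ x‖ := by simp_rw [norm_sub_rev]
    calc |c| * |(∫ x in A, ζ₂ x) - ∫ x in A, ζ x|
        ≤ |c| * (δ / 4 / (|c| + 1)) :=
          mul_le_mul_of_nonneg_left (hAb.trans (hζ₂L1.trans (min_le_right _ _)))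
            (abs_nonneg _)
      _ ≤ (|c| + 1) * (δ / 4 / (|c| + 1)) :=
          mul_le_mul_of_nonneg_right (by linarith) (by positivity)
      _ = δ / 4 := by field_simp
  rw [Real.dist_eq]
  calc |(∫ x, g ε x * ζ x) - c * ∫ x in A, ζ x|
      ≤ |(∫ x, g ε x * ζ x) - ∫ x, g ε x * ζ₂ x|
        + (|(∫ x, g ε x * ζ₂ x) - c * ∫ x in A, ζ₂ x|
          + |c * (∫ x in A, ζ₂ x) - c * ∫ x in A, ζ x|) := by
        have t1 := abs_sub_le (∫ x, g ε x * ζ x) (∫ x, g ε x * ζ₂ x) (c * ∫ x in A, ζ x)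
        have t2 := abs_sub_le (∫ x, g ε x * ζ₂ x) (c * ∫ x in A, ζ₂ x) (c * ∫ x in A, ζ x)
        linarith
    _ < δ / 4 + (δ / 4 + δ / 4) := by
        have := add_lt_add_of_lt_of_le h2 h3
        linarith
    _ ≤ δ := by linarith
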